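/- Let ρ ∈ M₂(ℂ) be a positive definite density matrix. Then there exists a unique Hermitian matrix K ∈ M₂(ℂ) which is positive semidefinite with det K = 0 (i.e., has spectrum {0, ε} with ε ≥ 0) such that ρ = exp(−K) / tr(exp(−K)). -/

import Mathlib

open Matrix NormedSpace
open scoped ComplexOrder

namespace GibbsAux

variable {U : Matrix (Fin 2) (Fin 2) ℂ}

lemma star_real_diag (d : Fin 2 → ℝ) :
    star (diagonal (fun i => (d i : ℂ))) = diagonal (fun i => (d i : ℂ)) := by
  rw [star_eq_conjTranspose, diagonal_conjTranspose]
  funext i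
  simp [Pi.star_def, Complex.conj_ofReal]

lemma conj_isHermitian (d : Fin 2 → ℝ) :
    (U * diagonal (fun i => (d i : ℂ)) * star U).IsHermitian := by
  show _ᴴ = _
  rw [← star_eq_conjTranspose, StarMul.star_mul, StarMul.star_mul, star_star, star_real_diag,
    mul_assoc]

lemma conj_posSemidef (d : Fin 2 → ℝ) (hd : ∀ i, 0 ≤ d i) :
    (U * diagonal (fun i => (d i : ℂ)) * star U).PosSemidef := by
  have h : (diagonal (fun i => (d i : ℂ))).PosSemidef := by
    rw [posSemidef_diagonal_iff]
    intro i
    exact_mod_cast hd i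
  simpa [star_eq_conjTranspose] using h.mul_mul_conjTranspose_same U

lemma conj_trace (h2 : star U * U = 1) (d : Fin 2 → ℂ) :
    (U * diagonal d * star U).trace = ∑ i, d i := by
  rw [trace_mul_cycle, h2, one_mul, trace_diagonal]

lemma conj_det (h2 : star U * U = 1) (d : Fin 2 → ℂ) :
    (U * diagonal d * star U).det = ∏ i, d i := by
  rw [det_mul, det_mul, mul_comm, ← mul_assoc, ← det_mul, h2]
  simp

lemma unit_of (h1 : U * star U = 1) (h2 : star U * U = 1) : IsUnit U :=
  ⟨⟨U, star U, h1, h2⟩, rfl⟩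

lemma conj_exp (h1 : U * star U = 1) (h2 : star U * U = 1) (d : Fin 2 → ℂ) :
    exp (U * diagonal d * star U) = U * diagonal (fun i => Complex.exp (d i)) * star U := by
  have hinv : U⁻¹ = star U := inv_eq_right_inv h1
  rw [← hinv, Matrix.exp_conj _ _ (unit_of h1 h2), Matrix.exp_diagonal]
  rw [Pi.exp_def]
  simp only [← Complex.exp_eq_exp_ℂ]

lemma conj_neg (d : Fin 2 → ℂ) :
    -(U * diagonal d * star U) = U * diagonal (fun i => -(d i)) * star U := by
  have h : (fun i => -(d i)) = -d := rfl
  rw [h]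
  have h2 : diagonal (-d) = -diagonal d := by
    ext i j
    by_cases hij : i = j <;> simp [diagonal, hij]
  rw [h2, mul_neg, neg_mul]

lemma exp_inj {A B : Matrix (Fin 2) (Fin 2) ℂ} (hA : A.IsHermitian) (hB : B.IsHermitian)
    (h : exp A = exp B) : A = B := by
  letI : NormedRing (Matrix (Fin 2) (Fin 2) ℂ) := Matrix.instL2OpNormedRing
  letI : NormedAlgebra ℂ (Matrix (Fin 2) (Fin 2) ℂ) := Matrix.instL2OpNormedAlgebra
  letI : NormedAlgebra ℝ (Matrix (Fin 2) (Fin 2) ℂ) := NormedAlgebra.restrictScalars ℝ ℂ _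
  have hA' : IsSelfAdjoint A := hA
  have hB' : IsSelfAdjoint B := hB
  have h' : exp A = exp B := by
    exact h
  calc A = CFC.log (exp A) := (CFC.log_exp A hA').symm
    _ = CFC.log (exp B) := by rw [h']
    _ = B := CFC.log_exp B hB'

lemma valid_struct {K : Matrix (Fin 2) (Fin 2) ℂ} (hK : K.PosSemidef) (hdet : K.det = 0) :
    ∃ t : ℝ, 0 < t ∧ t ≤ 1 ∧ (exp (-K)).trace = ((1 + t : ℝ) : ℂ) ∧
      (exp (-K)).det = (t : ℂ) := by
  have hH := hK.1
  set V : Matrix (Fin 2) (Fin 2) ℂ := (hH.eigenvectorUnitary : Matrix (Fin 2) (Fin 2) ℂ) with hV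
  have h1 : V * star V = 1 := (Matrix.mem_unitaryGroup_iff).mp hH.eigenvectorUnitary.2
  have h2 : star V * V = 1 := (Matrix.mem_unitaryGroup_iff').mp hH.eigenvectorUnitary.2
  set d := hH.eigenvalues with hd
  have hspec : K = V * diagonal (fun i => ((d i : ℝ) : ℂ)) * star V := by
    exact hH.spectral_theorem
  have hdnn : ∀ i, 0 ≤ d i := hK.eigenvalues_nonneg
  have hprod : (d 0 : ℂ) * (d 1 : ℂ) = 0 := by
    have := hH.det_eq_prod_eigenvalues
    rw [hdet] at this
    rw [Fin.prod_univ_two] at this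
    exact this.symm
  have hzero : d 0 = 0 ∨ d 1 = 0 := by
    rcases mul_eq_zero.mp hprod with h | h
    · exact Or.inl (by exact_mod_cast h)
    · exact Or.inr (by exact_mod_cast h)
  have hexp : exp (-K) = V * diagonal (fun i => Complex.exp (-(d i : ℂ))) * star V := by
    rw [hspec, conj_neg, conj_exp h1 h2]
  have htr : (exp (-K)).trace = Complex.exp (-(d 0 : ℂ)) + Complex.exp (-(d 1 : ℂ)) := by
    rw [hexp, conj_trace h2, Fin.sum_univ_two]
  have hdt : (exp (-K)).det = Complex.exp (-(d 0 : ℂ)) * Complex.exp (-(d 1 : ℂ)) := by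
    rw [hexp, conj_det h2, Fin.prod_univ_two]
  have hre : ∀ i, Complex.exp (-(d i : ℂ)) = ((Real.exp (-(d i)) : ℝ) : ℂ) := by
    intro i
    rw [Complex.ofReal_exp, Complex.ofReal_neg]
  rcases hzero with h0 | h0
  · refine ⟨Real.exp (-(d 1)), Real.exp_pos _,
      Real.exp_le_one_iff.mpr (by linarith [hdnn 1]), ?_, ?_⟩
    · rw [htr, hre 0, hre 1, h0]
      push_cast
      simp
    · rw [hdt, hre 0, hre 1, h0]
      push_cast
      simp
  · refine ⟨Real.exp (-(d 0)), Real.exp_pos _,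
      Real.exp_le_one_iff.mpr (by linarith [hdnn 0]), ?_, ?_⟩
    · rw [htr, hre 0, hre 1, h0]
      push_cast
      simp [add_comm]
    · rw [hdt, hre 0, hre 1, h0]
      push_cast
      simp

lemma exists_K (ρ : Matrix (Fin 2) (Fin 2) ℂ) (hρ : ρ.PosDef) (hρtr : ρ.trace = 1) :
    ∃ K : Matrix (Fin 2) (Fin 2) ℂ,
      K.IsHermitian ∧ K.PosSemidef ∧ K.det = 0 ∧
        ρ = ((exp (-K)).trace)⁻¹ • exp (-K) := by
  have hH := hρ.1
  set V : Matrix (Fin 2) (Fin 2) ℂ := (hH.eigenvectorUnitary : Matrix (Fin 2) (Fin 2) ℂ) with hV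
  have h1 : V * star V = 1 := (Matrix.mem_unitaryGroup_iff).mp hH.eigenvectorUnitary.2
  have h2 : star V * V = 1 := (Matrix.mem_unitaryGroup_iff').mp hH.eigenvectorUnitary.2
  set e := hH.eigenvalues with he
  have hepos : ∀ i, 0 < e i := hρ.eigenvalues_pos
  have hspec : ρ = V * diagonal (fun i => ((e i : ℝ) : ℂ)) * star V := by
    exact hH.spectral_theorem
  set m : ℝ := max (e 0) (e 1) with hm
  have hmpos : 0 < m := lt_max_of_lt_left (hepos 0)
  have hle : ∀ i, e i ≤ m := by
    intro i
    fin_cases i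
    · exact le_max_left _ _
    · exact le_max_right _ _
  set g : Fin 2 → ℝ := fun i => Real.log m - Real.log (e i) with hg
  refine ⟨V * diagonal (fun i => ((g i : ℝ) : ℂ)) * star V, conj_isHermitian g, ?_, ?_, ?_⟩
  · exact conj_posSemidef g fun i => sub_nonneg.mpr (Real.log_le_log (hepos i) (hle i))
  · rw [conj_det h2, Fin.prod_univ_two]
    have : g 0 = 0 ∨ g 1 = 0 := by
      rcases max_cases (e 0) (e 1) with ⟨hm', _⟩ | ⟨hm', _⟩
      · exact Or.inl (by show Real.log m - Real.log (e 0) = 0; rw [hm, hm', sub_self])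
      · exact Or.inr (by show Real.log m - Real.log (e 1) = 0; rw [hm, hm', sub_self])
    rcases this with h | h <;> simp [h]
  · have hexp : exp (-(V * diagonal (fun i => ((g i : ℝ) : ℂ)) * star V))
        = ((m : ℂ))⁻¹ • ρ := by
      rw [conj_neg, conj_exp h1 h2]
      have hc : ∀ i : Fin 2, Complex.exp (-((g i : ℝ) : ℂ)) = ((m)⁻¹ : ℂ) * ((e i : ℝ) : ℂ) := by
        intro i
        rw [← Complex.ofReal_neg, ← Complex.ofReal_exp]
        have : Real.exp (-(g i)) = m⁻¹ * e i := by
          rw [hg]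
          simp only [neg_sub]
          rw [Real.exp_sub, Real.exp_log (hepos i), Real.exp_log hmpos]
          rw [div_eq_inv_mul]
        rw [this]
        push_cast
        ring
      have hdiag : (diagonal fun i => Complex.exp (-((g i : ℝ) : ℂ)))
          = ((m : ℂ))⁻¹ • diagonal (fun i => ((e i : ℝ) : ℂ)) := by
        ext i j
        by_cases hij : i = j <;> simp [diagonal, hij, hc]
      rw [hdiag, mul_smul_comm, smul_mul_assoc, ← hspec]
    have hm0 : (m : ℂ) ≠ 0 := by exact_mod_cast hmpos.ne'
    rw [hexp, trace_smul, hρtr, smul_eq_mul, mul_one, inv_inv, smul_smul,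
      mul_inv_cancel₀ hm0, one_smul]

lemma uniq_K (ρ : Matrix (Fin 2) (Fin 2) ℂ)
    {K₁ K₂ : Matrix (Fin 2) (Fin 2) ℂ}
    (h₁ : K₁.IsHermitian ∧ K₁.PosSemidef ∧ K₁.det = 0 ∧
        ρ = ((exp (-K₁)).trace)⁻¹ • exp (-K₁))
    (h₂ : K₂.IsHermitian ∧ K₂.PosSemidef ∧ K₂.det = 0 ∧
        ρ = ((exp (-K₂)).trace)⁻¹ • exp (-K₂)) : K₁ = K₂ := by
  obtain ⟨hH₁, hP₁, hD₁, hE₁⟩ := h₁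
  obtain ⟨hH₂, hP₂, hD₂, hE₂⟩ := h₂
  obtain ⟨t₁, ht₁, ht₁', htr₁, hdt₁⟩ := valid_struct hP₁ hD₁
  obtain ⟨t₂, ht₂, ht₂', htr₂, hdt₂⟩ := valid_struct hP₂ hD₂
  have hc₁ : (0:ℝ) < 1 + t₁ := by linarith
  have hc₂ : (0:ℝ) < 1 + t₂ := by linarith
  have hdet₁ : ρ.det = (((1 + t₁ : ℝ))⁻¹ ^ 2 * t₁ : ℝ) := by
    rw [hE₁, det_smul, htr₁, hdt₁]
    push_cast
    norm_num
  have hdet₂ : ρ.det = (((1 + t₂ : ℝ))⁻¹ ^ 2 * t₂ : ℝ) := by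
    rw [hE₂, det_smul, htr₂, hdt₂]
    push_cast
    norm_num
  have hr : ((1 + t₁ : ℝ))⁻¹ ^ 2 * t₁ = ((1 + t₂ : ℝ))⁻¹ ^ 2 * t₂ := by
    exact Complex.ofReal_inj.mp (hdet₁.symm.trans hdet₂)
  have ht : t₁ = t₂ := by
    have key : (t₁ - t₂) * (1 - t₁ * t₂) = 0 := by
      field_simp at hr
      nlinarith [hr]
    rcases mul_eq_zero.mp key with h | h
    · linarith
    · nlinarith
  have hE : exp (-K₁) = exp (-K₂) := by
    have hcne : ((1 + t₁ : ℝ) : ℂ) ≠ 0 := by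
      exact_mod_cast hc₁.ne'
    have e₁ : exp (-K₁) = ((1 + t₁ : ℝ) : ℂ) • ρ := by
      rw [hE₁, htr₁, smul_smul, mul_inv_cancel₀ hcne, one_smul]
    have e₂ : exp (-K₂) = ((1 + t₂ : ℝ) : ℂ) • ρ := by
      rw [hE₂, htr₂, smul_smul, mul_inv_cancel₀ (by exact_mod_cast hc₂.ne'), one_smul]
    rw [e₁, e₂, ht]
  exact neg_inj.mp (exp_inj hH₁.neg hH₂.neg hE)

end GibbsAux

/-- Lemma 1 (Appendix A): a positive definite density matrix `ρ` on `M₂(ℂ)` can be written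
uniquely as `ρ = exp(−K)/tr(exp(−K))` with `K` Hermitian, positive semidefinite and
`det K = 0` (i.e. with spectrum `{0, ε ≥ 0}`). -/
theorem gibbs_K_existsUnique
    (ρ : Matrix (Fin 2) (Fin 2) ℂ) (hρ : ρ.PosDef) (hρtr : ρ.trace = 1) :
    ∃! K : Matrix (Fin 2) (Fin 2) ℂ,
      K.IsHermitian ∧ K.PosSemidef ∧ K.det = 0 ∧
        ρ = ((exp (-K)).trace)⁻¹ • exp (-K) := by
  obtain ⟨K, hK⟩ := GibbsAux.exists_K ρ hρ hρtr
  exact ⟨K, hK, fun y hy => GibbsAux.uniq_K ρ hy hK⟩
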